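/- Let a, b, c be the tree automorphisms of the binary tree defined by the wreath recursions a = σ(c,b), b = (c,b), c = (c,a) (automaton number 942). Then the subgroup generated by a and b is isomorphic to the lamplighter group C₂ ≀ ℤ; in particular, the group G₉₄₂ generated by a, b, c contains the lamplighter group as a subgroup. -/

import Mathlib

/-- An invertible automaton over the two-letter alphabet `Bool`:
a set of states `Q`, a transition map and an output map such that each state
acts on the alphabet by a permutation. -/
structure BinAutomaton (Q : Type*) where
  trans : Q → Bool → Q
  out : Q → Bool → Bool
  out_bij : ∀ q, Function.Bijective (out q)

namespace BinAutomaton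

variable {Q : Type*} (A : BinAutomaton Q)

/-- The action of a state on finite binary words:
`q(xw) = ρ(q,x) · (τ(q,x))(w)`. -/
def act : Q → List Bool → List Bool
  | _, [] => []
  | q, x :: w => A.out q x :: act (A.trans q x) w

theorem act_injective (q : Q) : Function.Injective (A.act q) := by
  intro u
  induction u generalizing q with
  | nil =>
    intro v h
    cases v with
    | nil => rfl
    | cons y v => simp [act] at h
  | cons x u ih =>
    intro v h
    cases v with
    | nil => simp [act] at h
    | cons y v =>
      simp only [act, List.cons.injEq] at h
      obtain ⟨h1, h2⟩ := h
      obtain rfl : x = y := (A.out_bij q).1 h1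
      rw [ih _ h2]

theorem act_surjective (q : Q) : Function.Surjective (A.act q) := by
  intro v
  induction v generalizing q with
  | nil => exact ⟨[], rfl⟩
  | cons y v ih =>
    obtain ⟨x, hx⟩ := (A.out_bij q).2 y
    obtain ⟨w, hw⟩ := ih (A.trans q x)
    exact ⟨x :: w, by simp [act, hx, hw]⟩

/-- The tree automorphism defined by the state `q`. -/
noncomputable def perm (q : Q) : Equiv.Perm (List Bool) :=
  Equiv.ofBijective (A.act q) ⟨A.act_injective q, A.act_surjective q⟩

/-- The group generated by the automaton: the subgroup of the group of
bijections of the binary tree generated by the states. -/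
noncomputable def autGroup : Subgroup (Equiv.Perm (List Bool)) :=
  Subgroup.closure (Set.range A.perm)

end BinAutomaton

/-- Helper constructing a 3-state automaton from the sections at `0`, the
sections at `1`, and the activity of each state. -/
def mkAut3 (t0 t1 : Fin 3 → Fin 3) (actv : Fin 3 → Bool) : BinAutomaton (Fin 3) where
  trans q x := cond x (t1 q) (t0 q)
  out q x := xor (actv q) x
  out_bij q := by
    have h : ∀ b : Bool, Function.Bijective fun x => xor b x := by decide
    exact h (actv q)

/-- The base group of the lamplighter group: the direct sum `⨁_{i ∈ ℤ} ℤ/2ℤ`,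
written multiplicatively. -/
abbrev LampBase : Type := Multiplicative (ℤ →₀ ZMod 2)

/-- The shift action of `ℤ` on `⨁_{i ∈ ℤ} ℤ/2ℤ`. -/
noncomputable def lampShift : Multiplicative ℤ →* MulAut LampBase :=
  MonoidHom.mk'
    (fun n => AddEquiv.toMultiplicative
      (Finsupp.domCongr (M := ZMod 2) (Equiv.addRight n.toAdd)))
    (by
      intro m n
      refine DFunLike.ext _ _ fun f => ?_
      show (Finsupp.equivMapDomain (Equiv.addRight ((m * n).toAdd)) f.toAdd : ℤ →₀ ZMod 2)
          = Finsupp.equivMapDomain (Equiv.addRight m.toAdd)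
              (Finsupp.equivMapDomain (Equiv.addRight n.toAdd) f.toAdd)
      ext i
      simp only [Finsupp.equivMapDomain_apply, Equiv.addRight_symm_apply, toAdd_mul]
      congr 1
      ring)

/-- The lamplighter group `C₂ ≀ ℤ`, as the semidirect product
`(⨁_{i ∈ ℤ} ℤ/2ℤ) ⋊ ℤ` where `ℤ` acts by shifting the coordinates. -/
abbrev Lamplighter : Type :=
  SemidirectProduct LampBase (Multiplicative ℤ) lampShift

/-- Automaton number 942:
`a = σ(c,b)`, `b = (c,b)`, `c = (c,a)` (states `0 = a`, `1 = b`, `2 = c`). -/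
def A942 : BinAutomaton (Fin 3) :=
  mkAut3 ![2, 2, 2] ![1, 1, 0] ![true, false, false]

noncomputable def a : Equiv.Perm (List Bool) := A942.perm 0
noncomputable def b : Equiv.Perm (List Bool) := A942.perm 1
noncomputable def c : Equiv.Perm (List Bool) := A942.perm 2

/-! ### Infrastructure: wreath product structure on `Equiv.Perm (List Bool)` -/

namespace Aut942

open Equiv

abbrev P := Equiv.Perm (List Bool)

/-- the function underlying `(g,h)` -/
def pwFun (g h : List Bool → List Bool) : List Bool → List Bool
  | [] => []
  | (x :: w) => x :: (cond x (h w) (g w))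

/-- the automorphism `(g,h)` -/
def pw (g h : P) : P where
  toFun := pwFun g h
  invFun := pwFun g.symm h.symm
  left_inv := by
    rintro (_ | ⟨x, w⟩)
    · rfl
    · cases x <;> simp [pwFun]
  right_inv := by
    rintro (_ | ⟨x, w⟩)
    · rfl
    · cases x <;> simp [pwFun]

/-- the automorphism `σ` flipping the first letter -/
def sw : P where
  toFun := fun w => match w with | [] => [] | (x :: w) => (!x) :: w
  invFun := fun w => match w with | [] => [] | (x :: w) => (!x) :: w
  left_inv := by rintro (_ | ⟨x, w⟩) <;> simp
  right_inv := by rintro (_ | ⟨x, w⟩) <;> simp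

@[simp] lemma pw_nil (g h : P) : pw g h [] = [] := rfl
@[simp] lemma pw_false (g h : P) (w : List Bool) : pw g h (false :: w) = false :: g w := rfl
@[simp] lemma pw_true (g h : P) (w : List Bool) : pw g h (true :: w) = true :: h w := rfl
@[simp] lemma sw_nil : sw [] = [] := rfl
@[simp] lemma sw_cons (x : Bool) (w : List Bool) : sw (x :: w) = (!x) :: w := rfl

lemma pw_mul (g h g' h' : P) : pw g h * pw g' h' = pw (g * g') (h * h') := by
  ext w
  rcases w with _ | ⟨x, w⟩
  · rfl
  · cases x <;> simp [Equiv.Perm.mul_apply]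

@[simp] lemma pw_one : pw 1 1 = (1 : P) := by
  ext w; rcases w with _ | ⟨x, w⟩
  · rfl
  · cases x <;> simp

/-- `pw` as a monoid homomorphism. -/
def pwHom : P × P →* P where
  toFun := fun p => pw p.1 p.2
  map_one' := pw_one
  map_mul' := fun p q => (pw_mul p.1 p.2 q.1 q.2).symm

@[simp] lemma pw_inv (g h : P) : (pw g h)⁻¹ = pw g⁻¹ h⁻¹ := by
  rw [inv_eq_iff_mul_eq_one, pw_mul]
  simp

@[simp] lemma sw_mul_sw : sw * sw = (1 : P) := by
  ext w; rcases w with _ | ⟨x, w⟩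
  · rfl
  · cases x <;> simp [Equiv.Perm.mul_apply]

@[simp] lemma sw_inv : sw⁻¹ = sw := by
  rw [inv_eq_iff_mul_eq_one, sw_mul_sw]

lemma sw_mul_pw (g h : P) : sw * pw g h = pw h g * sw := by
  ext w; rcases w with _ | ⟨x, w⟩
  · rfl
  · cases x <;> simp [Equiv.Perm.mul_apply]

lemma pw_mul_sw (g h : P) : pw g h * sw = sw * pw h g := by
  rw [sw_mul_pw]

lemma sw_comm_pw (g : P) : sw * pw g g = pw g g * sw := (sw_mul_pw g g).symm ▸ rfl

lemma pw_eq_one {g h : P} (hgh : pw g h = 1) : g = 1 ∧ h = 1 := by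
  constructor
  · refine Equiv.ext fun w => ?_
    have := congrArg (fun (e : P) => e (false :: w)) hgh
    simpa using this
  · refine Equiv.ext fun w => ?_
    have := congrArg (fun (e : P) => e (true :: w)) hgh
    simpa using this

lemma sw_pw_ne_one (g h : P) : sw * pw g h ≠ 1 := by
  intro hc
  have := congrArg (fun (e : P) => e [false]) hc
  simp [Equiv.Perm.mul_apply] at this

/-- `⟨g⟩ = (1, g)`, action on the right subtree only. -/
def pz (g : P) : P := pw 1 g

lemma pz_mul (g h : P) : pz g * pz h = pz (g * h) := by
  rw [pz, pz, pz, pw_mul, one_mul]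

@[simp] lemma pz_one : pz 1 = 1 := pw_one

@[simp] lemma pz_inv (g : P) : (pz g)⁻¹ = pz g⁻¹ := by rw [pz, pw_inv, inv_one]; rfl

lemma pz_eq_one {g : P} (h : pz g = 1) : g = 1 := (pw_eq_one h).2

end Aut942

namespace Aut942

lemma act_zero (w : List Bool) : A942.act 0 w = (sw * pw c b) w := by
  rcases w with _ | ⟨x, w⟩
  · rfl
  · have h1 : A942.act 0 (x :: w) = (!x) :: A942.act (cond x 1 2) w := by
      cases x <;> rfl
    rw [h1]
    cases x
    · simp [Equiv.Perm.mul_apply]; rfl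
    · simp [Equiv.Perm.mul_apply]; rfl

lemma act_one (w : List Bool) : A942.act 1 w = (pw c b) w := by
  rcases w with _ | ⟨x, w⟩
  · rfl
  · cases x
    · show A942.act 1 (false :: w) = false :: c w
      rfl
    · show A942.act 1 (true :: w) = true :: b w
      rfl

lemma act_two (w : List Bool) : A942.act 2 w = (pw c a) w := by
  rcases w with _ | ⟨x, w⟩
  · rfl
  · cases x
    · show A942.act 2 (false :: w) = false :: c w
      rfl
    · show A942.act 2 (true :: w) = true :: a w
      rfl

lemma a_eq : a = sw * pw c b := Equiv.ext act_zero
lemma b_eq : b = pw c b := Equiv.ext act_one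
lemma c_eq : c = pw c a := Equiv.ext act_two

lemma a_eq_sw_mul_b : a = sw * b := by rw [a_eq, ← b_eq]

lemma sw_eq : sw = a * b⁻¹ := by rw [a_eq_sw_mul_b, mul_assoc, mul_inv_cancel, mul_one]

end Aut942

namespace Aut942

/-! ### Conjugation formulas -/

lemma bconj_pw (g h : P) : b * pw g h * b⁻¹ = pw (c * g * c⁻¹) (b * h * b⁻¹) := by
  conv_lhs => rw [b_eq]
  rw [pw_inv, pw_mul, pw_mul]

lemma cconj_pw (g h : P) : c * pw g h * c⁻¹ = pw (c * g * c⁻¹) (a * h * a⁻¹) := by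
  conv_lhs => rw [c_eq]
  rw [pw_inv, pw_mul, pw_mul]

lemma bconj_pz (Z : P) : b * pz Z * b⁻¹ = pz (b * Z * b⁻¹) := by
  rw [pz, bconj_pw, mul_one, mul_inv_cancel]; rfl

lemma cconj_pz (Z : P) : c * pz Z * c⁻¹ = pz (a * Z * a⁻¹) := by
  rw [pz, cconj_pw, mul_one, mul_inv_cancel]; rfl

lemma b_mul_c_inv : b * c⁻¹ = pz sw := by
  have h : b * c⁻¹ = pw (c * c⁻¹) (b * a⁻¹) := by
    rw [← pw_mul, ← pw_inv, ← b_eq, ← c_eq]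
  have h2 : b * a⁻¹ = sw := by
    rw [a_eq_sw_mul_b, mul_inv_rev, ← mul_assoc, mul_inv_cancel, one_mul, sw_inv]
  rw [h, mul_inv_cancel, h2, pz]

lemma c_mul_b_inv : c * b⁻¹ = pz sw := by
  have h : c * b⁻¹ = pw (c * c⁻¹) (a * b⁻¹) := by
    rw [← pw_mul, ← pw_inv, ← b_eq, ← c_eq]
  rw [h, mul_inv_cancel, ← sw_eq, pz]

lemma bconj_sw : b * sw * b⁻¹ = sw * pw (pz sw) (pz sw) := by
  conv_lhs => rw [b_eq]
  rw [pw_inv, mul_assoc, sw_mul_pw, ← mul_assoc, pw_mul, c_mul_b_inv, b_mul_c_inv, pw_mul_sw]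

lemma aconj_eq (W : P) : a * W * a⁻¹ = sw * (b * W * b⁻¹) * sw := by
  rw [a_eq_sw_mul_b, mul_inv_rev, sw_inv]
  group

/-! ### The inductive predicate capturing sections of the lamp elements -/

inductive InW : P → Prop
  | one : InW 1
  | s0 {Z : P} : InW Z → InW (pw (pz Z) (pz Z))
  | s1 {Z : P} : InW Z → InW (sw * pw (pz Z) (pz Z))

lemma InW.sw_comm {W : P} (h : InW W) : sw * W = W * sw := by
  induction h with
  | one => rw [mul_one, one_mul]
  | s0 _ => rw [sw_mul_pw]
  | s1 _ => rw [← mul_assoc, sw_mul_sw, one_mul, mul_assoc, pw_mul_sw, ← mul_assoc, sw_mul_sw,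
      one_mul]

lemma InW.sq {W : P} (h : InW W) : W * W = 1 := by
  induction h with
  | one => rw [mul_one]
  | @s0 Z _ ih => rw [pw_mul, pz_mul, ih, pz_one, pw_one]
  | @s1 Z hZ ih =>
      have h2 : sw * (pw (pz Z) (pz Z) * sw) = sw * (sw * pw (pz Z) (pz Z)) := by
        rw [(InW.s0 hZ).sw_comm]
      calc sw * pw (pz Z) (pz Z) * (sw * pw (pz Z) (pz Z))
          = sw * (pw (pz Z) (pz Z) * sw) * pw (pz Z) (pz Z) := by group
        _ = sw * (sw * pw (pz Z) (pz Z)) * pw (pz Z) (pz Z) := by rw [h2]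
        _ = pw (pz Z) (pz Z) * pw (pz Z) (pz Z) := by rw [← mul_assoc, sw_mul_sw, one_mul]
        _ = 1 := by rw [pw_mul, pz_mul, ih, pz_one, pw_one]

lemma InW.swmul {W : P} (h : InW W) : InW (sw * W) := by
  cases h with
  | one =>
      rw [mul_one]
      have h := InW.s1 InW.one
      rwa [pz_one, pw_one, mul_one] at h
  | @s0 Z hZ => exact InW.s1 hZ
  | @s1 Z hZ => rw [← mul_assoc, sw_mul_sw, one_mul]; exact InW.s0 hZ

/-- key joint induction: `InW` is stable under conjugation by `b`, and conjugation
by `a` and by `b` agree on `InW`. -/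
lemma InW.conj {W : P} (h : InW W) :
    a * W * a⁻¹ = b * W * b⁻¹ ∧ InW (b * W * b⁻¹) := by
  induction h with
  | one =>
      constructor
      · rw [mul_one, mul_inv_cancel, mul_one, mul_inv_cancel]
      · rw [mul_one, mul_inv_cancel]; exact InW.one
  | @s0 Z hZ ih =>
      have hb : b * pw (pz Z) (pz Z) * b⁻¹ = pw (pz (b * Z * b⁻¹)) (pz (b * Z * b⁻¹)) := by
        rw [bconj_pw, cconj_pz, bconj_pz, ih.1]
      constructor
      · rw [aconj_eq, hb, sw_mul_pw]
        rw [mul_assoc, sw_mul_sw, mul_one]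
      · rw [hb]; exact InW.s0 ih.2
  | @s1 Z hZ ih =>
      have hb : b * (sw * pw (pz Z) (pz Z)) * b⁻¹
          = sw * pw (pz (sw * (b * Z * b⁻¹))) (pz (sw * (b * Z * b⁻¹))) := by
        calc b * (sw * pw (pz Z) (pz Z)) * b⁻¹
            = (b * sw * b⁻¹) * (b * pw (pz Z) (pz Z) * b⁻¹) := by group
          _ = (sw * pw (pz sw) (pz sw)) *
                pw (pz (b * Z * b⁻¹)) (pz (b * Z * b⁻¹)) := by
              rw [bconj_sw, bconj_pw, cconj_pz, bconj_pz, ih.1]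
          _ = sw * pw (pz (sw * (b * Z * b⁻¹))) (pz (sw * (b * Z * b⁻¹))) := by
              rw [mul_assoc, pw_mul, pz_mul]
      constructor
      · rw [aconj_eq, hb, ← mul_assoc, sw_mul_sw, one_mul, pw_mul_sw]
      · rw [hb]; exact InW.s1 ih.2.swmul

/-! ### The lamp elements and their sections -/

/-- `e n = bⁿ σ b⁻ⁿ` -/
noncomputable def e (n : ℤ) : P := b ^ n * sw * (b ^ n)⁻¹

@[simp] lemma e_zero : e 0 = sw := by simp [e]

lemma conj_e (m n : ℤ) : b ^ m * e n * (b ^ m)⁻¹ = e (n + m) := by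
  rw [e, e, zpow_add]
  group

lemma e_sq (n : ℤ) : e n * e n = 1 := by
  simp only [e]
  calc b ^ n * sw * (b ^ n)⁻¹ * (b ^ n * sw * (b ^ n)⁻¹)
      = b ^ n * (sw * sw) * (b ^ n)⁻¹ := by group
    _ = 1 := by rw [sw_mul_sw, mul_one, mul_inv_cancel]

@[simp] lemma e_inv (n : ℤ) : (e n)⁻¹ = e n := by
  rw [inv_eq_iff_mul_eq_one, e_sq]

/-- the auxiliary sequence of sections: `X (n+1) = b (X n) b⁻¹ σ` -/
noncomputable def X : ℕ → P
  | 0 => 1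
  | (n+1) => b * X n * b⁻¹ * sw

lemma InW_X (n : ℕ) : InW (X n) := by
  induction n with
  | zero => exact InW.one
  | succ n ih =>
      show InW (b * X n * b⁻¹ * sw)
      have h1 : InW (b * X n * b⁻¹) := ih.conj.2
      have := h1.swmul
      rwa [h1.sw_comm] at this

lemma e_form (n : ℕ) : e n = sw * pw (pz (X n)) (pz (X n)) := by
  induction n with
  | zero =>
      rw [Nat.cast_zero, e_zero, show X 0 = 1 from rfl, pz_one, pw_one, mul_one]
  | succ n ih =>
      have hcast : ((n + 1 : ℕ) : ℤ) = (n : ℤ) + 1 := by push_cast; ring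
      have h1 : e ((n : ℤ) + 1) = b * e n * b⁻¹ := by
        rw [← conj_e (1 : ℤ) n, zpow_one]
      have h2 : b * e n * b⁻¹ = sw * pw (pz (X (n+1))) (pz (X (n+1))) := by
        rw [ih]
        calc b * (sw * pw (pz (X n)) (pz (X n))) * b⁻¹
            = (b * sw * b⁻¹) * (b * pw (pz (X n)) (pz (X n)) * b⁻¹) := by group
          _ = (sw * pw (pz sw) (pz sw)) *
                pw (pz (b * X n * b⁻¹)) (pz (b * X n * b⁻¹)) := by
              rw [bconj_sw, bconj_pw, cconj_pz, bconj_pz, (InW_X n).conj.1]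
          _ = sw * pw (pz (sw * (b * X n * b⁻¹))) (pz (sw * (b * X n * b⁻¹))) := by
              rw [mul_assoc, pw_mul, pz_mul]
          _ = sw * pw (pz (X (n+1))) (pz (X (n+1))) := by
              rw [show X (n+1) = b * X n * b⁻¹ * sw from rfl,
                ← (InW_X n).conj.2.sw_comm]
      rw [hcast, h1, h2]

lemma sw_comm_e_nat (m : ℕ) : sw * e m = e m * sw := by
  rw [e_form m]
  calc sw * (sw * pw (pz (X m)) (pz (X m))) = pw (pz (X m)) (pz (X m)) := by
        rw [← mul_assoc, sw_mul_sw, one_mul]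
    _ = (sw * pw (pz (X m)) (pz (X m))) * sw := by
        rw [mul_assoc, pw_mul_sw, ← mul_assoc, sw_mul_sw, one_mul]

lemma sw_comm_e (n : ℤ) : sw * e n = e n * sw := by
  rcases le_or_gt 0 n with h | h
  · obtain ⟨m, rfl⟩ := Int.eq_ofNat_of_zero_le h
    exact sw_comm_e_nat m
  · obtain ⟨m, hm⟩ := Int.eq_ofNat_of_zero_le (by omega : (0:ℤ) ≤ -n)
    have key : sw * e (-n) = e (-n) * sw := by rw [hm]; exact sw_comm_e_nat m
    have h1 : b ^ (-n) * sw * (b ^ (-n))⁻¹ = e (-n) := rfl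
    have h2 : b ^ (-n) * e n * (b ^ (-n))⁻¹ = e 0 := by rw [conj_e]; norm_num
    have hconj : b ^ (-n) * (sw * e n) * (b ^ (-n))⁻¹
        = b ^ (-n) * (e n * sw) * (b ^ (-n))⁻¹ := by
      calc b ^ (-n) * (sw * e n) * (b ^ (-n))⁻¹
          = (b ^ (-n) * sw * (b ^ (-n))⁻¹) * (b ^ (-n) * e n * (b ^ (-n))⁻¹) := by group
        _ = e (-n) * e 0 := by rw [h1, h2]
        _ = e 0 * e (-n) := by rw [e_zero, key]
        _ = (b ^ (-n) * e n * (b ^ (-n))⁻¹) * (b ^ (-n) * sw * (b ^ (-n))⁻¹) := by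
            rw [h1, h2]
        _ = b ^ (-n) * (e n * sw) * (b ^ (-n))⁻¹ := by group
    exact mul_left_cancel (mul_right_cancel hconj)

lemma e_comm (m n : ℤ) : e m * e n = e n * e m := by
  have key : sw * e (n - m) = e (n - m) * sw := sw_comm_e (n - m)
  have h1 : b ^ m * sw * (b ^ m)⁻¹ = e m := rfl
  have h2 : b ^ m * e (n - m) * (b ^ m)⁻¹ = e n := by rw [conj_e, sub_add_cancel]
  calc e m * e n = (b ^ m * sw * (b ^ m)⁻¹) * (b ^ m * e (n - m) * (b ^ m)⁻¹) := by
        rw [h1, h2]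
    _ = b ^ m * (sw * e (n - m)) * (b ^ m)⁻¹ := by group
    _ = b ^ m * (e (n - m) * sw) * (b ^ m)⁻¹ := by rw [key]
    _ = (b ^ m * e (n - m) * (b ^ m)⁻¹) * (b ^ m * sw * (b ^ m)⁻¹) := by group
    _ = e n * e m := by rw [h1, h2]

end Aut942

namespace Aut942

open Finset

/-! ### The abelian subgroup generated by the lamps -/

noncomputable def V : Subgroup P := Subgroup.closure (Set.range e)

lemma e_mem_V (n : ℤ) : e n ∈ V := Subgroup.subset_closure ⟨n, rfl⟩

lemma V_comm : ∀ x ∈ V, ∀ y ∈ V, x * y = y * x := by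
  intro x hx y hy
  refine Subgroup.closure_induction₂
    (p := fun x y _ _ => Commute x y) ?_ ?_ ?_ ?_ ?_ ?_ ?_ hx hy
  · rintro _ _ ⟨i, rfl⟩ ⟨j, rfl⟩; exact e_comm i j
  · intro x _; exact Commute.one_left x
  · intro x _; exact Commute.one_right x
  · intro x y z _ _ _ h1 h2; exact h1.mul_left h2
  · intro y z x _ _ _ h1 h2; exact h1.mul_right h2
  · intro x y _ _ h; exact h.inv_left
  · intro x y _ _ h; exact h.inv_right

noncomputable instance : CommGroup ↥V :=
  { (inferInstance : Group ↥V) with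
    mul_comm := fun x y => Subtype.ext (V_comm ↑x x.2 ↑y y.2) }

noncomputable def ev (n : ℤ) : ↥V := ⟨e n, e_mem_V n⟩

@[simp] lemma coe_ev (n : ℤ) : (ev n : P) = e n := rfl

lemma ev_sq (n : ℤ) : ev n * ev n = 1 := Subtype.ext (e_sq n)

@[simp] lemma ev_inv (n : ℤ) : (ev n)⁻¹ = ev n := by
  rw [inv_eq_iff_mul_eq_one, ev_sq]

/-! ### `EF n = e n ⋯ e 0` and its tree sections -/

noncomputable def EF : ℕ → ↥V
  | 0 => ev 0
  | (n+1) => ev (↑(n+1)) * EF n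

lemma coe_EF_succ (n : ℕ) : (EF (n+1) : P) = e (↑(n+1)) * (EF n : P) := rfl

lemma EF_conj (n : ℕ) : b * (EF n : P) * b⁻¹ = (EF (n+1) : P) * sw := by
  induction n with
  | zero =>
      show b * (e 0) * b⁻¹ = (e 1 * e 0) * sw
      have h := conj_e 1 0
      rw [zpow_one] at h
      rw [h, e_zero, zero_add, mul_assoc, sw_mul_sw, mul_one]
  | succ n ih =>
      have h : b * e (↑(n+1)) * b⁻¹ = e (↑(n+2)) := by
        have h := conj_e 1 (↑(n+1))
        rw [zpow_one] at h
        rw [h]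
        congr 1
      calc b * (EF (n+1) : P) * b⁻¹
          = (b * e (↑(n+1)) * b⁻¹) * (b * (EF n : P) * b⁻¹) := by
            rw [coe_EF_succ]; group
        _ = e (↑(n+2)) * ((EF (n+1) : P) * sw) := by rw [h, ih]
        _ = (EF (n+2) : P) * sw := by rw [coe_EF_succ (n+1)]; group

lemma X_eq_EF (n : ℕ) : X (n+1) = (EF n : P) := by
  induction n with
  | zero =>
      show b * X 0 * b⁻¹ * sw = (EF 0 : P)
      rw [show X 0 = 1 from rfl, mul_one, mul_inv_cancel, one_mul]
      show sw = e 0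
      rw [e_zero]
  | succ n ih =>
      show b * X (n+1) * b⁻¹ * sw = (EF (n+1) : P)
      rw [ih, EF_conj, mul_assoc, sw_mul_sw, mul_one]

lemma X_mem_V (n : ℕ) : X n ∈ V := by
  cases n with
  | zero => exact one_mem V
  | succ n => rw [X_eq_EF]; exact (EF n).2

/-! ### normal forms -/

/-- normal form `σ^t (1,(1,Z)) (1,(1,Z))` -/
def form (t : Bool) (Z : P) : P := cond t (sw * pw (pz Z) (pz Z)) (pw (pz Z) (pz Z))

lemma form_mul (s t : Bool) (A B : P) :
    form s A * form t B = form (xor s t) (A * B) := by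
  cases s <;> cases t <;> simp only [form, cond, Bool.xor_false, Bool.xor_true,
    Bool.false_xor, Bool.true_xor, Bool.not_true, Bool.not_false]
  · rw [pw_mul, pz_mul]
  · rw [show pw (pz A) (pz A) * (sw * pw (pz B) (pz B))
        = (pw (pz A) (pz A) * sw) * pw (pz B) (pz B) by group,
      pw_mul_sw, mul_assoc, pw_mul, pz_mul]
  · rw [mul_assoc, pw_mul, pz_mul]
  · rw [show sw * pw (pz A) (pz A) * (sw * pw (pz B) (pz B))
        = sw * (pw (pz A) (pz A) * sw) * pw (pz B) (pz B) by group,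
      pw_mul_sw, ← mul_assoc, sw_mul_sw, one_mul, pw_mul, pz_mul]

lemma form_true_ne_one (Z : P) : form true Z ≠ 1 := sw_pw_ne_one _ _

lemma form_false_eq_one {Z : P} (h : form false Z = 1) : Z = 1 :=
  pz_eq_one (pw_eq_one h).1

lemma e_form' (n : ℕ) : e n = form true (X n) := e_form n

/-- `ZF n = EF (n-1) * ⋯ * EF 0` -/
noncomputable def ZF : ℕ → ↥V
  | 0 => 1
  | (n+1) => EF n * ZF n

lemma bool_succ_mod (n : ℕ) : ((n+1) % 2 == 0) = !(n % 2 == 0) := by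
  rcases Nat.mod_two_eq_zero_or_one n with h | h
  · have h2 : (n+1) % 2 = 1 := by omega
    rw [h, h2]; rfl
  · have h2 : (n+1) % 2 = 0 := by omega
    rw [h, h2]; rfl

lemma EF_par (n : ℕ) : (EF n : P) = form (n % 2 == 0) ((ZF n : P)) := by
  induction n with
  | zero =>
      show (e 0 : P) = form true ((1 : ↥V) : P)
      rw [e_zero, form]
      simp
  | succ n ih =>
      have hC1 : (EF (n+1) : P) = form true ((EF n : P)) * (EF n : P) := by
        rw [coe_EF_succ, e_form', X_eq_EF]
      rw [hC1]
      conv_lhs => rw [ih]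
      have hzf : (EF n : P) * (ZF n : P) = ((ZF (n+1) : P)) := rfl
      rw [form_mul, ← ih, hzf, bool_succ_mod]
      congr 1
      cases h : (n % 2 == 0) <;> rfl

lemma EF_sq (n : ℕ) : EF n * EF n = 1 := by
  induction n with
  | zero => exact ev_sq 0
  | succ n ih =>
      show (ev (↑(n+1)) * EF n) * (ev (↑(n+1)) * EF n) = 1
      rw [mul_mul_mul_comm, ev_sq, one_mul, ih]

/-! ### products of the `EF`'s over finite sets -/

noncomputable def PE (T : Finset ℕ) : ↥V := ∏ j ∈ T, EF j

lemma ZF_eq_PE (n : ℕ) : ZF n = PE (range n) := by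
  induction n with
  | zero => rfl
  | succ n ih =>
      show EF n * ZF n = PE (range (n+1))
      rw [ih, PE, PE, Finset.prod_range_succ, mul_comm]

/-- parity of the number of `σ`-active factors in `PE T` -/
def parT (T : Finset ℕ) : Bool := ((T.filter (fun j => j % 2 = 0)).card % 2 == 1)

lemma PE_form (T : Finset ℕ) :
    (PE T : P) = form (parT T) ((∏ j ∈ T, ZF j : ↥V) : P) := by
  classical
  induction T using Finset.induction_on with
  | empty =>
      show ((1 : ↥V) : P) = form false ((1 : ↥V) : P)
      rw [form]
      simp
  | @insert j T hj ih =>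
      have h1 : (PE (insert j T) : P) = (EF j : P) * (PE T : P) := by
        rw [PE, Finset.prod_insert hj]; rfl
      have h2 : ((∏ k ∈ insert j T, ZF k : ↥V) : P)
          = (ZF j : P) * ((∏ k ∈ T, ZF k : ↥V) : P) := by
        rw [Finset.prod_insert hj]; rfl
      rw [h1, h2, ih, EF_par, form_mul]
      congr 1
      -- parity bookkeeping
      have aux : ∀ m : ℕ, (true ^^ (m % 2 == 1)) = ((m+1) % 2 == 1) := by
        intro m
        rcases Nat.mod_two_eq_zero_or_one m with h | h
        · rw [h, show (m+1) % 2 = 1 by omega]; rfl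
        · rw [h, show (m+1) % 2 = 0 by omega]; rfl
      rw [parT, parT, Finset.filter_insert]
      rcases Nat.mod_two_eq_zero_or_one j with h | h
      · rw [if_pos h]
        have hj2 : j ∉ T.filter (fun j => j % 2 = 0) :=
          fun hc => hj (Finset.mem_of_mem_filter _ hc)
        rw [Finset.card_insert_of_notMem hj2,
          show (j % 2 == 0) = true by rw [h]; rfl, aux]
      · rw [if_neg (by omega), show (j % 2 == 0) = false by rw [h]; rfl, Bool.false_xor]

end Aut942

namespace Aut942

open Finset

/-! ### Collecting exponents: `∏_{j∈T} ZF j` as a product of `EF`'s -/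

lemma ZP_eq (N : ℕ) (T : Finset ℕ) (hT : ∀ j ∈ T, j ≤ N) :
    ∏ j ∈ T, ZF j = ∏ k ∈ range N, EF k ^ ((T.filter (fun j => k < j)).card) := by
  classical
  induction T using Finset.induction_on with
  | empty =>
      simp
  | @insert j T hj ih =>
      have hjN : j ≤ N := hT j (Finset.mem_insert_self j T)
      have hT' : ∀ i ∈ T, i ≤ N := fun i hi => hT i (Finset.mem_insert_of_mem hi)
      rw [Finset.prod_insert hj, ih hT']
      have hzf : ZF j = ∏ k ∈ range N, EF k ^ (if k < j then 1 else 0) := by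
        rw [ZF_eq_PE, PE]
        have hr : range j = (range N).filter (fun k => k < j) := by
          ext k
          simp only [Finset.mem_range, Finset.mem_filter]
          omega
        rw [hr, Finset.prod_filter]
        apply Finset.prod_congr rfl
        intro k _
        rw [pow_boole]
      rw [hzf, ← Finset.prod_mul_distrib]
      apply Finset.prod_congr rfl
      intro k _
      rw [← pow_add]
      congr 1
      rw [Finset.filter_insert]
      by_cases hkj : k < j
      · rw [if_pos hkj, if_pos hkj, Finset.card_insert_of_notMem
          (fun hc => hj (Finset.mem_of_mem_filter _ hc))]
        omega
      · rw [if_neg hkj, if_neg hkj]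
        omega

lemma EF_pow_mod (k m : ℕ) : EF k ^ m = EF k ^ (m % 2) := by
  conv_lhs => rw [← Nat.div_add_mod m 2, pow_add, pow_mul]
  rw [show EF k ^ 2 = 1 by rw [pow_two, EF_sq], one_pow, one_mul]

lemma prod_pow_eq_PE (N : ℕ) (cf : ℕ → ℕ) :
    ∏ k ∈ range N, EF k ^ (cf k) = PE ((range N).filter (fun k => cf k % 2 = 1)) := by
  classical
  rw [PE, Finset.prod_filter]
  apply Finset.prod_congr rfl
  intro k _
  rw [EF_pow_mod]
  rcases Nat.mod_two_eq_zero_or_one (cf k) with h | h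
  · rw [h]; simp
  · rw [h]; simp

/-! ### Independence of the `EF` family -/

lemma PE_ne_one : ∀ N : ℕ, ∀ T : Finset ℕ, (∀ j ∈ T, j < N) → T.Nonempty → PE T ≠ 1 := by
  intro N
  induction N with
  | zero =>
      intro T hT ⟨j, hj⟩ _
      exact absurd (hT j hj) (by omega)
  | succ N ih =>
      intro T hT hTne hPE
      have hform := PE_form T
      rw [hPE] at hform
      -- `1 = form (parT T) _`
      cases hpar : parT T with
      | true =>
          rw [hpar] at hform
          exact form_true_ne_one _ (by rw [← hform]; rfl)
      | false =>
          rw [hpar] at hform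
          have hZ : ((∏ j ∈ T, ZF j : ↥V) : P) = 1 := by
            rw [← form_false_eq_one (Z := ((∏ j ∈ T, ZF j : ↥V) : P)) (by rw [← hform]; rfl)]
          set M := T.max' hTne with hM
          have hMT : M ∈ T := T.max'_mem hTne
          have hMle : ∀ j ∈ T, j ≤ M := fun j hj => T.le_max' j hj
          by_cases hM0 : M = 0
          · -- then `T = {0}` and the parity is odd, contradiction
            have : T = {0} := by
              apply Finset.eq_singleton_iff_unique_mem.2
              exact ⟨hM0 ▸ hMT, fun x hx => by have := hMle x hx; omega⟩
            rw [this] at hpar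
            have : parT {0} = true := by decide
            rw [this] at hpar
            exact absurd hpar (by simp)
          · -- reduce to a smaller nonempty set
            have hZP := ZP_eq M T hMle
            rw [prod_pow_eq_PE] at hZP
            set T' := ((range M).filter (fun k => (T.filter (fun j => k < j)).card % 2 = 1))
              with hT'
            have hT'lt : ∀ j ∈ T', j < N := by
              intro j hjmem
              rw [hT'] at hjmem
              have := Finset.mem_range.1 (Finset.mem_of_mem_filter _ hjmem)
              have hMN : M < N + 1 := hT M hMT
              omega
            have hT'ne : T'.Nonempty := by
              refine ⟨M - 1, ?_⟩
              rw [hT', Finset.mem_filter, Finset.mem_range]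
              constructor
              · omega
              · have : T.filter (fun j => M - 1 < j) = {M} := by
                  ext j
                  simp only [Finset.mem_filter, Finset.mem_singleton]
                  constructor
                  · rintro ⟨hjT, hj2⟩
                    have := hMle j hjT
                    omega
                  · rintro rfl
                    exact ⟨hMT, by omega⟩
                rw [this]
                rfl
            have : PE T' = 1 := by
              rw [← hZP]
              exact Subtype.ext hZ
            exact ih T' hT'lt hT'ne this

/-! ### Independence of the lamps themselves -/

noncomputable def XV (n : ℕ) : ↥V := ⟨X n, X_mem_V n⟩

lemma prod_ev_form (S : Finset ℕ) :
    ((∏ n ∈ S, ev n : ↥V) : P) = form (S.card % 2 == 1) ((∏ n ∈ S, XV n : ↥V) : P) := by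
  classical
  induction S using Finset.induction_on with
  | empty =>
      show ((1 : ↥V) : P) = form false ((1 : ↥V) : P)
      rw [form]; simp
  | @insert j S hj ih =>
      have h1 : ((∏ n ∈ insert j S, ev n : ↥V) : P) = (ev (j:ℤ) : P) * _ :=
        congrArg _ (Finset.prod_insert hj)
      have aux : ∀ m : ℕ, (true ^^ (m % 2 == 1)) = ((m+1) % 2 == 1) := by
        intro m
        rcases Nat.mod_two_eq_zero_or_one m with h | h
        · rw [h, show (m+1) % 2 = 1 by omega]; rfl
        · rw [h, show (m+1) % 2 = 0 by omega]; rfl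
      rw [Finset.prod_insert hj, Finset.prod_insert hj, Finset.card_insert_of_notMem hj]
      push_cast [Subgroup.coe_mul]
      rw [coe_ev, e_form', ih, form_mul, aux]
      rfl

lemma prod_ev_ne_one (S : Finset ℕ) (hS : S.Nonempty) : (∏ n ∈ S, ev n : ↥V) ≠ 1 := by
  classical
  intro hc
  have hform := prod_ev_form S
  rw [hc] at hform
  cases hpar : (S.card % 2 == 1) with
  | true =>
      rw [hpar] at hform
      exact form_true_ne_one _ (by rw [← hform]; rfl)
  | false =>
      rw [hpar] at hform
      have hZ : ((∏ n ∈ S, XV n : ↥V) : P) = 1 := by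
        rw [← form_false_eq_one (Z := ((∏ n ∈ S, XV n : ↥V) : P)) (by rw [← hform]; rfl)]
      -- rewrite as a `PE` product
      have hXV0 : XV 0 = 1 := rfl
      have h0 : ∏ n ∈ S, XV n = ∏ n ∈ S.erase 0, XV n :=
        (Finset.prod_erase S hXV0).symm
      have hinj : ∀ x ∈ S.erase 0, ∀ y ∈ S.erase 0, x - 1 = y - 1 → x = y := by
        intro x hx y hy hxy
        have hx0 : x ≠ 0 := (Finset.mem_erase.1 hx).1
        have hy0 : y ≠ 0 := (Finset.mem_erase.1 hy).1
        omega
      have h1 : ∏ n ∈ S.erase 0, XV n = PE ((S.erase 0).image (fun n => n - 1)) := by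
        rw [PE, Finset.prod_image hinj]
        apply Finset.prod_congr rfl
        intro n hn
        have hn0 : n ≠ 0 := (Finset.mem_erase.1 hn).1
        obtain ⟨m, rfl⟩ := Nat.exists_eq_succ_of_ne_zero hn0
        show XV (m+1) = EF (m + 1 - 1)
        rw [show m + 1 - 1 = m by omega]
        exact Subtype.ext (X_eq_EF m)
      -- `S.erase 0` is nonempty since `S` has even, positive cardinality... 
      have hSne0 : (S.erase 0).Nonempty := by
        by_contra hemp
        rw [Finset.not_nonempty_iff_eq_empty] at hemp
        have hsub : S ⊆ {0} := by
          intro x hx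
          by_contra hx0
          have hxe : x ∈ S.erase 0 := Finset.mem_erase.2 ⟨by simpa using hx0, hx⟩
          rw [hemp] at hxe
          exact absurd hxe (Finset.notMem_empty x)
        have hcard : S.card ≤ 1 := le_trans (Finset.card_le_card hsub) (by simp)
        have hcard1 : S.card = 1 := by
          have := Finset.card_pos.2 hS
          omega
        rw [hcard1] at hpar
        exact absurd hpar (by decide)
      set T := ((S.erase 0).image (fun n => n - 1)) with hT
      have hTne : T.Nonempty := Finset.Nonempty.image hSne0 _
      have hPE1 : PE T = 1 := by
        rw [← h1, ← h0]
        exact Subtype.ext hZ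
      exact PE_ne_one (T.max' hTne + 1) T (fun j hj => by
        have := T.le_max' j hj; omega) hTne hPE1

/-! ### conjugation on `V`, and independence over `ℤ` -/

lemma conj_mem_V (m : ℤ) {g : P} (hg : g ∈ V) : b ^ m * g * (b ^ m)⁻¹ ∈ V := by
  refine Subgroup.closure_induction ?_ ?_ ?_ ?_ hg
  · rintro x ⟨i, rfl⟩
    rw [conj_e]
    exact e_mem_V _
  · rw [mul_one, mul_inv_cancel]
    exact one_mem V
  · intro x y _ _ hx hy
    have : b ^ m * (x * y) * (b ^ m)⁻¹
        = (b ^ m * x * (b ^ m)⁻¹) * (b ^ m * y * (b ^ m)⁻¹) := by group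
    rw [this]
    exact mul_mem hx hy
  · intro x _ hx
    have : b ^ m * x⁻¹ * (b ^ m)⁻¹ = (b ^ m * x * (b ^ m)⁻¹)⁻¹ := by group
    rw [this]
    exact inv_mem hx

noncomputable def kappa (m : ℤ) : ↥V →* ↥V where
  toFun := fun x => ⟨b ^ m * ↑x * (b ^ m)⁻¹, conj_mem_V m x.2⟩
  map_one' := by
    apply Subtype.ext
    show b ^ m * 1 * (b ^ m)⁻¹ = 1
    rw [mul_one, mul_inv_cancel]
  map_mul' := fun x y => by
    apply Subtype.ext
    show b ^ m * (↑x * ↑y) * (b ^ m)⁻¹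
        = (b ^ m * ↑x * (b ^ m)⁻¹) * (b ^ m * ↑y * (b ^ m)⁻¹)
    group

lemma kappa_ev (m i : ℤ) : kappa m (ev i) = ev (i + m) := Subtype.ext (conj_e m i)

lemma prod_evz_ne_one (S : Finset ℤ) (hS : S.Nonempty) : (∏ i ∈ S, ev i : ↥V) ≠ 1 := by
  classical
  intro hc
  set m := S.min' hS with hm
  have hmin : ∀ i ∈ S, m ≤ i := fun i hi => S.min'_le i hi
  have h1 : (∏ i ∈ S, ev (i + -m) : ↥V) = 1 := by
    rw [← Finset.prod_congr rfl (fun i (_ : i ∈ S) => kappa_ev (-m) i), ← map_prod, hc,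
      map_one]
  -- transfer to a `Finset ℕ`
  set S' : Finset ℕ := S.image (fun i => (i - m).toNat) with hS'
  have hinj : ∀ x ∈ S, ∀ y ∈ S, (x - m).toNat = (y - m).toNat → x = y := by
    intro x hx y hy hxy
    have := hmin x hx
    have := hmin y hy
    omega
  have h2 : (∏ n ∈ S', ev n : ↥V) = ∏ i ∈ S, ev (i + -m) := by
    rw [hS', Finset.prod_image hinj]
    apply Finset.prod_congr rfl
    intro i hi
    congr 1
    have := hmin i hi
    omega
  exact prod_ev_ne_one S' (hS.image _) (by rw [h2, h1])

end Aut942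

namespace Aut942

open Finset

/-! ### powers in wreath coordinates -/

lemma b_zpow (n : ℤ) : b ^ n = pw (c ^ n) (b ^ n) := by
  have h : b = pwHom (c, b) := b_eq
  calc b ^ n = (pwHom (c, b)) ^ n := by rw [← h]
    _ = pwHom ((c, b) ^ n) := (map_zpow pwHom _ _).symm
    _ = pw (c ^ n) (b ^ n) := rfl

lemma c_zpow (n : ℤ) : c ^ n = pw (c ^ n) (a ^ n) := by
  have h : c = pwHom (c, a) := c_eq
  calc c ^ n = (pwHom (c, a)) ^ n := by rw [← h]
    _ = pwHom ((c, a) ^ n) := (map_zpow pwHom _ _).symm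
    _ = pw (c ^ n) (a ^ n) := rfl

lemma pw_pow (g h : P) (k : ℕ) : (pw g h) ^ k = pw (g ^ k) (h ^ k) := by
  calc (pw g h) ^ k = (pwHom (g, h)) ^ k := rfl
    _ = pwHom ((g, h) ^ k) := (map_pow pwHom _ _).symm
    _ = pw (g ^ k) (h ^ k) := rfl

lemma c_pow (n : ℕ) : c ^ n = pw (c ^ n) (a ^ n) := by
  have h := c_zpow (n : ℤ)
  rw [zpow_natCast] at h
  rw [h]
  congr 1

/-! ### the uniform section formula for the lamps -/

lemma e_sections (n : ℤ) :
    e n = pw (pz (a ^ n * b ^ (-n))) (pz (b ^ n * a ^ (-n))) * sw := by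
  have h1 : c ^ n * (b ^ n)⁻¹ = pz (a ^ n * b ^ (-n)) := by
    conv_lhs => rw [c_zpow n, b_zpow n]
    rw [pw_inv, pw_mul, mul_inv_cancel, ← zpow_neg]
    rfl
  have h2 : b ^ n * (c ^ n)⁻¹ = pz (b ^ n * a ^ (-n)) := by
    conv_lhs => rw [c_zpow n, b_zpow n]
    rw [pw_inv, pw_mul, mul_inv_cancel, ← zpow_neg]
    rfl
  conv_lhs => rw [e, b_zpow n]
  rw [pw_inv, mul_assoc, sw_mul_pw, ← mul_assoc, pw_mul, h1, h2]

/-! ### The subgroup of permutations preserving the shape `_ :: false :: w` -/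

def Gd : Subgroup P where
  carrier := {g | ∀ (x : Bool) (w : List Bool), ∃ y, g (x :: false :: w) = y :: false :: w}
  one_mem' := fun x w => ⟨x, rfl⟩
  mul_mem' := by
    intro g h hg hh x w
    obtain ⟨y, hy⟩ := hh x w
    obtain ⟨z, hz⟩ := hg y w
    exact ⟨z, by rw [Equiv.Perm.mul_apply, hy, hz]⟩
  inv_mem' := by
    intro g hg x w
    obtain ⟨y0, hy0⟩ := hg false w
    obtain ⟨y1, hy1⟩ := hg true w
    by_cases h0 : y0 = x
    · subst h0
      exact ⟨false, by rw [← hy0, Equiv.Perm.inv_def, Equiv.symm_apply_apply]⟩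
    · by_cases h1 : y1 = x
      · subst h1
        exact ⟨true, by rw [← hy1, Equiv.Perm.inv_def, Equiv.symm_apply_apply]⟩
      · exfalso
        have hy01 : y0 = y1 := by
          cases y0 <;> cases y1 <;> cases x <;> simp_all
        have := g.injective (hy0.trans ((hy01 ▸ hy1).symm))
        simp at this

lemma pz_apply_false (Z : P) (w : List Bool) : pz Z (false :: w) = false :: w := by
  rw [pz, pw_false]
  rfl

lemma e_mem_Gd (n : ℤ) : e n ∈ Gd := by
  intro x w
  refine ⟨!x, ?_⟩
  rw [e_sections n, Equiv.Perm.mul_apply, sw_cons]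
  cases x
  · rw [Bool.not_false, pw_true, pz_apply_false]
  · rw [Bool.not_true, pw_false, pz_apply_false]

lemma V_le_Gd : V ≤ Gd := (Subgroup.closure_le Gd).2 (by rintro g ⟨n, rfl⟩; exact e_mem_Gd n)

/-! ### infinite order of `c` -/

lemma a_sq : a * a = pw (b * c) (c * b) := by
  conv_lhs => rw [a_eq]
  rw [show sw * pw c b * (sw * pw c b) = sw * (pw c b * sw) * pw c b by group,
    pw_mul_sw, ← mul_assoc, sw_mul_sw, one_mul, pw_mul]

lemma a_odd_ne_one (k : ℕ) : a ^ (2 * k + 1) ≠ 1 := by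
  have h1 : a ^ (2 * k + 1) = (a * a) ^ k * a := by
    rw [pow_succ, pow_mul, pow_two]
  rw [h1, a_sq, pw_pow]
  conv_lhs => rw [a_eq]
  rw [show pw ((b * c) ^ k) ((c * b) ^ k) * (sw * pw c b)
      = (pw ((b * c) ^ k) ((c * b) ^ k) * sw) * pw c b by group,
    pw_mul_sw, mul_assoc, pw_mul]
  exact sw_pw_ne_one _ _

lemma cb_eq : c * b = pw (c * c) (a * b) := by
  rw [← pw_mul, ← b_eq, ← c_eq]

lemma ab_eq : a * b = sw * (b * b) := by
  rw [a_eq_sw_mul_b, mul_assoc]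

/-- the partial products `e 0 * e 2 * ⋯ * e (2m-2)` -/
noncomputable def gam : ℕ → ↥V
  | 0 => 1
  | (m+1) => gam m * ev (2*m)

lemma gam_prod (m : ℕ) : gam m = ∏ j ∈ range m, ev (2*j) := by
  induction m with
  | zero => rfl
  | succ m ih =>
      show gam m * ev (2*m) = _
      rw [ih, Finset.prod_range_succ]

lemma swb2_pow (m : ℕ) : (sw * (b * b)) ^ m = (gam m : P) * b ^ (2 * m : ℤ) := by
  induction m with
  | zero =>
      rw [pow_zero, show ((2 : ℤ) * ((0:ℕ) : ℤ)) = 0 by norm_num, zpow_zero, mul_one]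
      rfl
  | succ m ih =>
      have key : b ^ (2 * m : ℤ) * sw = e (2*m) * b ^ (2 * m : ℤ) := by
        rw [e]
        group
      have hexp : (2 : ℤ) * ((m : ℤ) + 1) = 2 * (m : ℤ) + 1 + 1 := by ring
      calc (sw * (b * b)) ^ (m+1) = (gam m : P) * b ^ (2 * m : ℤ) * (sw * (b * b)) := by
            rw [pow_succ, ih]
        _ = (gam m : P) * (b ^ (2 * m : ℤ) * sw) * (b * b) := by group
        _ = (gam m : P) * (e (2*m) * b ^ (2 * m : ℤ)) * (b * b) := by rw [key]
        _ = ((gam m : P) * e (2*m)) * (b ^ (2 * m : ℤ) * b * b) := by group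
        _ = (gam (m+1) : P) * b ^ (2 * (m+1) : ℤ) := by
            have h1 : (gam (m+1) : P) = (gam m : P) * e (2*m) := rfl
            rw [h1, hexp, zpow_add, zpow_add, zpow_one]

/-- the key consequence of independence: `(σ b²)^m ≠ 1` for `m ≥ 1`. -/
lemma swb2_pow_ne_one (m : ℕ) (hm : 1 ≤ m) : (sw * (b * b)) ^ m ≠ 1 := by
  intro hc
  rw [swb2_pow] at hc
  have hb2m : b ^ (2 * m : ℤ) = (((gam m)⁻¹ : ↥V) : P) := by
    rw [Subgroup.coe_inv, eq_comm, inv_eq_iff_mul_eq_one]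
    exact hc
  -- conjugation by `b` fixes `b ^ (2m)`, hence fixes `gam m`
  have hconj : ((kappa 1 ((gam m)⁻¹) : ↥V) : P) = (((gam m)⁻¹ : ↥V) : P) := by
    show b ^ (1:ℤ) * (((gam m)⁻¹ : ↥V) : P) * (b ^ (1:ℤ))⁻¹ = (((gam m)⁻¹ : ↥V) : P)
    rw [← hb2m]
    group
  have hgam : kappa 1 ((gam m)⁻¹) = (gam m)⁻¹ := Subtype.ext hconj
  have hgam2 : kappa 1 (gam m) = gam m := by
    have := congrArg (·⁻¹) hgam
    simpa using this
  -- now expand as products over even and odd indices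
  have hA : gam m = ∏ i ∈ (range m).image (fun j : ℕ => 2 * (j : ℤ)), ev i := by
    rw [gam_prod, Finset.prod_image (by intro x _ y _ h; have h' : 2 * (x:ℤ) = 2 * (y:ℤ) := h; omega)]
  have hB : kappa 1 (gam m) = ∏ i ∈ (range m).image (fun j : ℕ => 2 * (j : ℤ) + 1), ev i := by
    rw [gam_prod, map_prod, Finset.prod_image (by intro x _ y _ h; have h' : 2 * (x:ℤ) + 1 = 2 * (y:ℤ) + 1 := h; omega)]
    apply Finset.prod_congr rfl
    intro j _
    rw [kappa_ev]
  have hAB : Disjoint ((range m).image (fun j : ℕ => 2 * (j : ℤ)))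
      ((range m).image (fun j : ℕ => 2 * (j : ℤ) + 1)) := by
    rw [Finset.disjoint_left]
    rintro i hi1 hi2
    simp only [Finset.mem_image, Finset.mem_range] at hi1 hi2
    obtain ⟨x, _, rfl⟩ := hi1
    obtain ⟨y, _, hy⟩ := hi2
    omega
  have hsq : gam m * gam m = 1 := by
    rw [hA, ← Finset.prod_mul_distrib, Finset.prod_eq_one]
    intro i _
    exact ev_sq i
  have hunion : (∏ i ∈ ((range m).image (fun j : ℕ => 2 * (j : ℤ))) ∪
      ((range m).image (fun j : ℕ => 2 * (j : ℤ) + 1)), ev i) = 1 := by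
    rw [Finset.prod_union hAB, ← hA, ← hB, hgam2, hsq]
  refine prod_evz_ne_one _ ?_ hunion
  refine Finset.Nonempty.inl ?_
  exact ⟨0, Finset.mem_image.2 ⟨0, Finset.mem_range.2 (by omega), by norm_num⟩⟩

/-- `c` has infinite order. -/
lemma c_zpow_eq_one (n : ℤ) (hc : c ^ n = 1) : n = 0 := by
  by_contra hn
  set k := n.natAbs with hk
  have hk1 : 1 ≤ k := by omega
  have hck : c ^ k = 1 := by
    have h2 : c ^ (k : ℤ) = 1 := by
      rcases Int.natAbs_eq n with h | h
      · rw [← h, hc]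
      · rw [show (k : ℤ) = -n by omega, zpow_neg, hc, inv_one]
    rwa [zpow_natCast] at h2
  have han : a ^ k = 1 := by
    have hpw : pw (c ^ k) (a ^ k) = 1 := by rw [← c_pow, hck]
    exact (pw_eq_one hpw).2
  rcases Nat.even_or_odd k with hev | hodd
  · obtain ⟨r, hr⟩ := hev
    have hr1 : 1 ≤ r := by omega
    have h3 : (a * a) ^ r = 1 := by
      rw [← pow_two, ← pow_mul]
      rw [show 2 * r = k by omega] at *
      exact han
    rw [a_sq, pw_pow] at h3
    have h4 : (c * b) ^ r = 1 := (pw_eq_one h3).2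
    rw [cb_eq, pw_pow] at h4
    have h5 : (a * b) ^ r = 1 := (pw_eq_one h4).2
    rw [ab_eq] at h5
    exact swb2_pow_ne_one r hr1 h5
  · obtain ⟨r, hr⟩ := hodd
    exact a_odd_ne_one r (hr ▸ han)

end Aut942

namespace Aut942

open Finset

/-! ### The homomorphism from the lamplighter group -/

lemma zmod2_cases (x : ZMod 2) : x = 0 ∨ x = 1 := by revert x; decide

noncomputable def zl (i : ℤ) : ZMod 2 →+ Additive ↥V :=
  ZMod.lift 2 ⟨(zmultiplesHom (Additive ↥V)) (Additive.ofMul (ev i)), by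
    show ((2 : ℕ) : ℤ) • Additive.ofMul (ev i) = 0
    rw [natCast_zsmul, ← ofMul_pow, pow_two, ev_sq]
    rfl⟩

lemma zl_one (i : ℤ) : zl i (1 : ZMod 2) = Additive.ofMul (ev i) := by
  have h1 : (1 : ZMod 2) = ((1 : ℤ) : ZMod 2) := by norm_num
  rw [zl, h1, ZMod.lift_coe]
  show (1 : ℤ) • Additive.ofMul (ev i) = _
  rw [one_smul]

noncomputable def evHom : (ℤ →₀ ZMod 2) →+ Additive ↥V :=
  Finsupp.liftAddHom zl

noncomputable def phiV : Multiplicative (ℤ →₀ ZMod 2) →* ↥V :=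
  AddMonoidHom.toMultiplicativeLeft evHom

noncomputable def phiN : Multiplicative (ℤ →₀ ZMod 2) →* P :=
  (Subgroup.subtype V).comp phiV

lemma phiN_mem_V (f : Multiplicative (ℤ →₀ ZMod 2)) : phiN f ∈ V := (phiV f).2

lemma phiN_single_one (i : ℤ) :
    phiN (Multiplicative.ofAdd (Finsupp.single i 1)) = e i := by
  show ((Additive.toMul (evHom (Finsupp.single i 1)) : ↥V) : P) = e i
  rw [evHom, Finsupp.liftAddHom_apply_single, zl_one]
  rfl

lemma phiN_single_zero (i : ℤ) :
    phiN (Multiplicative.ofAdd (Finsupp.single i (0 : ZMod 2))) = 1 := by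
  rw [Finsupp.single_zero]
  show ((Additive.toMul (evHom 0) : ↥V) : P) = 1
  rw [map_zero]
  rfl

lemma phiV_prod (f : ℤ →₀ ZMod 2) :
    phiV (Multiplicative.ofAdd f) = ∏ i ∈ f.support, ev i := by
  have h1 : phiV (Multiplicative.ofAdd f) = Additive.toMul (evHom f) := rfl
  rw [h1, evHom, Finsupp.liftAddHom_apply]
  rw [Finsupp.sum, toMul_sum]
  apply Finset.prod_congr rfl
  intro i hi
  have hne : f i ≠ 0 := Finsupp.mem_support_iff.1 hi
  have hfi : f i = 1 := by
    rcases zmod2_cases (f i) with h | h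
    · exact absurd h hne
    · exact h
  rw [hfi, zl_one]
  rfl

/-- the compatibility of `phiN` with the shift -/
lemma compat : ∀ g : Multiplicative ℤ,
    phiN.comp (MulEquiv.toMonoidHom (lampShift g))
      = (MulEquiv.toMonoidHom (MulAut.conj ((zpowersHom P b) g))).comp phiN := by
  intro g
  apply AddMonoidHom.toMultiplicativeLeft.symm.injective
  apply Finsupp.addHom_ext
  intro i x
  show phiN (lampShift g (Multiplicative.ofAdd (Finsupp.single i x)))
      = (MulAut.conj ((zpowersHom P b) g)) (phiN (Multiplicative.ofAdd (Finsupp.single i x)))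
  have hshift : lampShift g (Multiplicative.ofAdd (Finsupp.single i x))
      = Multiplicative.ofAdd (Finsupp.single (i + g.toAdd) x) := by
    show Multiplicative.ofAdd (Finsupp.equivMapDomain (Equiv.addRight g.toAdd)
        (Finsupp.single i x)) = _
    rw [Finsupp.equivMapDomain_single]
    rfl
  rw [hshift]
  rcases zmod2_cases x with rfl | rfl
  · rw [phiN_single_zero, phiN_single_zero, map_one]
  · rw [phiN_single_one, phiN_single_one]
    show e (i + g.toAdd) = ((zpowersHom P b) g) * e i * (((zpowersHom P b) g))⁻¹
    rw [zpowersHom_apply, conj_e]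

/-- the homomorphism from the lamplighter group to `Perm (List Bool)` -/
noncomputable def Phi : Lamplighter →* P :=
  SemidirectProduct.lift phiN (zpowersHom P b) compat

lemma Phi_apply (x : Lamplighter) : Phi x = phiN x.left * b ^ (x.right.toAdd) := by
  conv_lhs => rw [← SemidirectProduct.inl_left_mul_inr_right x]
  rw [map_mul, Phi, SemidirectProduct.lift_inl, SemidirectProduct.lift_inr, zpowersHom_apply]

lemma Phi_injective : Function.Injective Phi := by
  rw [injective_iff_map_eq_one]
  intro x hx
  rw [Phi_apply] at hx
  set n := x.right.toAdd with hn
  -- Step 1: n = 0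
  have hbn : b ^ n = (phiN x.left)⁻¹ := eq_inv_of_mul_eq_one_right hx
  have hGd : b ^ n ∈ Gd := by
    rw [hbn]
    exact inv_mem (V_le_Gd (phiN_mem_V x.left))
  have hfix : ∀ w, (c ^ n) w = w := by
    intro w
    obtain ⟨y, hy⟩ := hGd false w
    have h1 : (b ^ n) (false :: false :: w) = false :: false :: ((c ^ n) w) := by
      conv_lhs => rw [b_zpow n]
      rw [pw_false]
      congr 1
      conv_lhs => rw [c_zpow n]
      rw [pw_false]
    rw [h1] at hy
    simp only [List.cons.injEq] at hy
    exact hy.2.2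
  have hc1 : c ^ n = 1 := Equiv.ext fun w => by rw [hfix w]; rfl
  have hn0 : n = 0 := c_zpow_eq_one n hc1
  have hxr : x.right = 1 := toAdd_eq_zero.1 (by rw [← hn, hn0])
  -- Step 2: the finitely supported function is zero
  rw [hn0, zpow_zero, mul_one] at hx
  have hfV : phiV x.left = 1 := OneMemClass.coe_eq_one.1 hx
  have hf0 : x.left = 1 := by
    by_contra hne
    have hfne : x.left.toAdd ≠ 0 := fun h => hne (toAdd_eq_zero.1 h)
    have hsup : (x.left.toAdd).support.Nonempty := Finsupp.support_nonempty_iff.2 hfne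
    have hprod : phiV (Multiplicative.ofAdd x.left.toAdd) = 1 := by
      rw [show Multiplicative.ofAdd x.left.toAdd = x.left from rfl, hfV]
    rw [phiV_prod] at hprod
    exact prod_evz_ne_one _ hsup hprod
  exact SemidirectProduct.ext hf0 hxr

/-! ### identifying the image -/

lemma b_mem_K : b ∈ Subgroup.closure ({a, b} : Set P) :=
  Subgroup.subset_closure (by simp)

lemma a_mem_K : a ∈ Subgroup.closure ({a, b} : Set P) :=
  Subgroup.subset_closure (by simp)

lemma sw_mem_K : sw ∈ Subgroup.closure ({a, b} : Set P) := by
  rw [sw_eq]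
  exact mul_mem a_mem_K (inv_mem b_mem_K)

lemma e_mem_K (i : ℤ) : e i ∈ Subgroup.closure ({a, b} : Set P) :=
  mul_mem (mul_mem (zpow_mem b_mem_K i) sw_mem_K) (inv_mem (zpow_mem b_mem_K i))

lemma V_le_K : V ≤ Subgroup.closure ({a, b} : Set P) :=
  (Subgroup.closure_le _).2 (by rintro g ⟨i, rfl⟩; exact e_mem_K i)

lemma Phi_range : Phi.range = Subgroup.closure ({a, b} : Set P) := by
  apply le_antisymm
  · rintro g ⟨x, rfl⟩
    rw [Phi_apply]
    exact mul_mem (V_le_K (phiN_mem_V x.left)) (zpow_mem b_mem_K _)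
  · rw [Subgroup.closure_le]
    intro g hg
    simp only [Set.mem_insert_iff, Set.mem_singleton_iff] at hg
    rcases hg with rfl | rfl
    · refine ⟨SemidirectProduct.inl (Multiplicative.ofAdd (Finsupp.single 0 1)) *
        SemidirectProduct.inr (Multiplicative.ofAdd 1), ?_⟩
      rw [map_mul, Phi, SemidirectProduct.lift_inl, SemidirectProduct.lift_inr,
        zpowersHom_apply, phiN_single_one,
        show (Multiplicative.ofAdd (1:ℤ)).toAdd = 1 from rfl, zpow_one, e_zero,
        ← a_eq_sw_mul_b]
    · exact ⟨SemidirectProduct.inr (Multiplicative.ofAdd 1), by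
        rw [Phi, SemidirectProduct.lift_inr, zpowersHom_apply,
          show (Multiplicative.ofAdd (1:ℤ)).toAdd = 1 from rfl, zpow_one]⟩

/-- the main isomorphism -/
noncomputable def mainEquiv : ↥(Subgroup.closure ({a, b} : Set P)) ≃* Lamplighter :=
  ((MonoidHom.ofInjective Phi_injective).trans (MulEquiv.subgroupCongr Phi_range)).symm

end Aut942

/-- In the group generated by automaton 942, the subgroup generated by `a` and
`b` is isomorphic to the lamplighter group `C₂ ≀ ℤ`; in particular `G₉₄₂`
contains the lamplighter group as a subgroup. -/
theorem automaton942_group_contains_lamplighter :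
    Nonempty (↥(Subgroup.closure {a, b}) ≃* Lamplighter) ∧
    ∃ H : Subgroup (Equiv.Perm (List Bool)),
      H ≤ Subgroup.closure {a, b, c} ∧ Nonempty (↥H ≃* Lamplighter) := by
  refine ⟨⟨Aut942.mainEquiv⟩, Subgroup.closure {a, b}, ?_, ⟨Aut942.mainEquiv⟩⟩
  apply Subgroup.closure_mono
  intro x hx
  simp only [Set.mem_insert_iff, Set.mem_singleton_iff] at hx ⊢
  tauto
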